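/- Let α, β, μ, ν, θ > 0 and let Π : ℕ×ℕ → [0,∞) be a probability mass function (Σ_{n,m} Π(n,m) = 1) with Σ_{m} m·Π(n,m) < ∞ for every n, satisfying for all (n,m) ∈ ℕ² the Kolmogorov equations [α + β + ((μn+νm)/(n+m))·1_{n+m>0} + θm]·Π(n,m) = α·Π(n−1,m)·1_{n>0} + β·Π(n,m−1)·1_{m>0} + (μ(n+1)/(n+m+1))·Π(n+1,m) + (m+1)·(ν/(n+m+1)+θ)·Π(n,m+1). Then for every n ∈ ℕ, α·Σ_{m≥0} Π(n,m) = μ·(n+1)·Σ_{m≥0} Π(n+1,m)/(n+m+1). -/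

import Mathlib

noncomputable section

open Real Filter Set

/-- The stationary Kolmogorov equations of the two-class Markovian
processor-sharing queue with one impatient class: patient arrival rate `α`,
impatient arrival rate `β`, service rates `μ` and `ν`, impatience rate `θ`. -/
def KolmogorovEqs (α β μ ν θ : ℝ) (P : ℕ → ℕ → ℝ) : Prop :=
  ∀ n m : ℕ,
    (α + β + (if 0 < n + m then (μ * n + ν * m) / ((n : ℝ) + m) else 0) + θ * m) * P n m
      = α * (if 0 < n then P (n - 1) m else 0)
        + β * (if 0 < m then P n (m - 1) else 0)
        + μ * ((n : ℝ) + 1) / ((n : ℝ) + m + 1) * P (n + 1) m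
        + ((m : ℝ) + 1) * (ν / ((n : ℝ) + m + 1) + θ) * P n (m + 1)

/-- `P` is a stationary distribution of the two-class processor-sharing queue. -/
def IsStationaryDist (α β μ ν θ : ℝ) (P : ℕ → ℕ → ℝ) : Prop :=
  (∀ n m : ℕ, 0 ≤ P n m) ∧ HasSum (fun p : ℕ × ℕ => P p.1 p.2) 1 ∧
    KolmogorovEqs α β μ ν θ P

/-- Flow balance for the marginal of the patient-customer component:
`α Σ_m Π(n,m) = μ(n+1) Σ_m Π(n+1,m)/(n+m+1)`. -/
theorem marginal_flow_balance
    (α β μ ν θ : ℝ) (hα : 0 < α) (hβ : 0 < β) (hμ : 0 < μ) (hν : 0 < ν) (hθ : 0 < θ)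
    (P : ℕ → ℕ → ℝ) (hP : IsStationaryDist α β μ ν θ P)
    (hmom : ∀ n : ℕ, Summable (fun m : ℕ => (m : ℝ) * P n m)) :
    ∀ n : ℕ, α * ∑' m : ℕ, P n m
      = μ * ((n : ℝ) + 1) * ∑' m : ℕ, P (n + 1) m / ((n : ℝ) + m + 1) := by
  obtain ⟨hpos, hsum1, hK⟩ := hP
  have hslice : ∀ n : ℕ, Summable (fun m : ℕ => P n m) := by
    intro n
    have hi : Function.Injective (fun m : ℕ => ((n, m) : ℕ × ℕ)) := fun a b h => by simpa using h
    exact hsum1.summable.comp_injective hi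
  have hdiv : ∀ n : ℕ, Summable (fun m : ℕ => P n m / ((n : ℝ) + m)) := by
    intro n
    refine Summable.of_nonneg_of_le (fun m => div_nonneg (hpos n m) (by positivity))
      (fun m => ?_) (hslice n)
    rcases Nat.eq_zero_or_pos (n + m) with h | h
    · obtain ⟨h1, h2⟩ := Nat.add_eq_zero.mp h
      subst h1; subst h2; simpa using hpos 0 0
    · refine div_le_self (hpos n m) ?_
      have h' : (1 : ℕ) ≤ n + m := h
      calc (1:ℝ) ≤ ((n + m : ℕ) : ℝ) := by exact_mod_cast h'
        _ = (n:ℝ) + m := by push_cast; ring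
  have hmdiv : ∀ n : ℕ, Summable (fun m : ℕ => (m:ℝ) / ((n : ℝ) + m) * P n m) := by
    intro n
    refine Summable.of_nonneg_of_le
      (fun m => mul_nonneg (div_nonneg (by positivity) (by positivity)) (hpos n m))
      (fun m => ?_) (hslice n)
    refine mul_le_of_le_one_left (hpos n m) ?_
    exact div_le_one_of_le₀ (by exact le_add_of_nonneg_left (Nat.cast_nonneg n)) (by positivity)
  have key : ∀ n : ℕ,
      α * (∑' m : ℕ, P n m) + μ * (n:ℝ) * (∑' m : ℕ, P n m / ((n:ℝ) + m))
        = α * (if 0 < n then ∑' m : ℕ, P (n-1) m else 0)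
          + μ * ((n:ℝ) + 1) * (∑' m : ℕ, P (n+1) m / ((n:ℝ) + m + 1)) := by
    intro n
    have sA : Summable (fun m : ℕ => α * P n m) := (hslice n).mul_left α
    have sB : Summable (fun m : ℕ => β * P n m) := (hslice n).mul_left β
    have sC : Summable (fun m : ℕ => μ * (n:ℝ) * (P n m / ((n:ℝ) + m))) := (hdiv n).mul_left _
    have sD : Summable (fun m : ℕ => ν * ((m:ℝ) / ((n:ℝ) + m) * P n m)) := (hmdiv n).mul_left ν
    have sE : Summable (fun m : ℕ => θ * ((m:ℝ) * P n m)) := (hmom n).mul_left θ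
    have sdiv' : Summable (fun m : ℕ => P (n+1) m / ((n:ℝ) + m + 1)) := by
      have h := hdiv (n+1)
      have he : (fun m : ℕ => P (n+1) m / (((n+1:ℕ):ℝ) + m))
          = fun m : ℕ => P (n+1) m / ((n:ℝ) + m + 1) := by
        funext m; push_cast; ring_nf
      rwa [he] at h
    have sRA : Summable (fun m : ℕ => α * (if 0 < n then P (n-1) m else 0)) := by
      split_ifs with h
      · exact (hslice (n-1)).mul_left α
      · simpa using summable_zero
    have sG : Summable (fun m : ℕ => (if 0 < m then P n (m-1) else 0)) := by
      apply (summable_nat_add_iff 1).mp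
      have he : (fun m : ℕ => (if 0 < m + 1 then P n (m+1-1) else 0)) = fun m : ℕ => P n m := by
        funext m; simp
      rw [he]
      exact hslice n
    have sRB : Summable (fun m : ℕ => β * (if 0 < m then P n (m-1) else 0)) := sG.mul_left β
    have sRC : Summable (fun m : ℕ => μ * ((n:ℝ)+1) * (P (n+1) m / ((n:ℝ) + m + 1))) :=
      sdiv'.mul_left _
    have sH : Summable (fun k : ℕ => (k:ℝ) * (ν / ((n:ℝ) + k) + θ) * P n k) := by
      have he : (fun k : ℕ => (k:ℝ) * (ν / ((n:ℝ) + k) + θ) * P n k)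
          = fun k : ℕ => ν * ((k:ℝ) / ((n:ℝ) + k) * P n k) + θ * ((k:ℝ) * P n k) := by
        funext k; ring
      rw [he]; exact ((hmdiv n).mul_left ν).add ((hmom n).mul_left θ)
    have heRD : (fun m : ℕ => ((m:ℝ)+1) * (ν / ((n:ℝ) + m + 1) + θ) * P n (m+1))
        = fun m : ℕ => (((m+1:ℕ)):ℝ) * (ν / ((n:ℝ) + ((m+1:ℕ):ℝ)) + θ) * P n (m+1) := by
      funext m; push_cast; ring
    have sRD : Summable (fun m : ℕ => ((m:ℝ)+1) * (ν / ((n:ℝ) + m + 1) + θ) * P n (m+1)) := by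
      rw [heRD]
      exact (summable_nat_add_iff 1).mpr sH
    have tG : ∑' m : ℕ, (if 0 < m then P n (m-1) else 0) = ∑' m : ℕ, P n m := by
      rw [Summable.tsum_eq_zero_add sG]
      simp
    have tH : ∑' m : ℕ, ((m:ℝ)+1) * (ν / ((n:ℝ) + m + 1) + θ) * P n (m+1)
        = ν * (∑' m : ℕ, (m:ℝ) / ((n:ℝ) + m) * P n m) + θ * (∑' m : ℕ, (m:ℝ) * P n m) := by
      rw [heRD]
      have h2 := Summable.tsum_eq_zero_add sH
      simp only [Nat.cast_zero, zero_mul, zero_add] at h2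
      rw [← h2]
      have he : (fun k : ℕ => (k:ℝ) * (ν / ((n:ℝ) + k) + θ) * P n k)
          = fun k : ℕ => ν * ((k:ℝ) / ((n:ℝ) + k) * P n k) + θ * ((k:ℝ) * P n k) := by
        funext k; ring
      rw [he, Summable.tsum_add ((hmdiv n).mul_left ν) ((hmom n).mul_left θ), tsum_mul_left, tsum_mul_left]
    have tRA : ∑' m : ℕ, (if 0 < n then P (n-1) m else 0)
        = (if 0 < n then ∑' m : ℕ, P (n-1) m else 0) := by
      split_ifs <;> simp
    have hKsum : (∑' m : ℕ, (α * P n m + β * P n m + μ * (n:ℝ) * (P n m / ((n:ℝ)+m))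
          + ν * ((m:ℝ)/((n:ℝ)+m) * P n m) + θ * ((m:ℝ) * P n m)))
        = ∑' m : ℕ, (α * (if 0 < n then P (n-1) m else 0)
          + β * (if 0 < m then P n (m-1) else 0)
          + μ * ((n:ℝ)+1) * (P (n+1) m / ((n:ℝ)+m+1))
          + ((m:ℝ)+1) * (ν/((n:ℝ)+m+1)+θ) * P n (m+1)) := by
      apply tsum_congr
      intro m
      have h0 := hK n m
      have hc : (if 0 < n + m then (μ * (n:ℝ) + ν * (m:ℝ)) / ((n:ℝ) + m) else 0)
          = μ * (n:ℝ)/((n:ℝ)+m) + ν * (m:ℝ)/((n:ℝ)+m) := by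
        rcases Nat.eq_zero_or_pos (n + m) with h | h
        · obtain ⟨h1, h2⟩ := Nat.add_eq_zero.mp h
          subst h1; subst h2; norm_num
        · rw [if_pos h, ← add_div]
      rw [hc] at h0
      linear_combination h0
    rw [Summable.tsum_add (((sA.add sB).add sC).add sD) sE, Summable.tsum_add ((sA.add sB).add sC) sD,
        Summable.tsum_add (sA.add sB) sC, Summable.tsum_add sA sB] at hKsum
    rw [Summable.tsum_add ((sRA.add sRB).add sRC) sRD, Summable.tsum_add (sRA.add sRB) sRC,
        Summable.tsum_add sRA sRB] at hKsum
    simp only [tsum_mul_left] at hKsum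
    rw [tG, tH, tRA] at hKsum
    linarith [hKsum]
  intro n
  induction n with
  | zero => simpa using key 0
  | succ k ih =>
    have h1 := key (k+1)
    simp only [Nat.add_sub_cancel, Nat.succ_pos, if_pos, Nat.cast_add, Nat.cast_one] at h1
    push_cast at h1 ⊢
    have e : (∑' m : ℕ, P (k+1) m / ((k:ℝ) + 1 + ↑m))
        = ∑' m : ℕ, P (k+1) m / ((k:ℝ) + ↑m + 1) :=
      tsum_congr fun m => by ring_nf
    rw [e] at h1
    linear_combination h1 + ih
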